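/- Assume Hypothesis 7.1 holds for the subset I ⊆ S. Then the determinant of the m × m matrix Ā^I(Λ) = [Ā^I_{uv}(Λ)]_{u,v ∈ U^I_min} is a nonzero polynomial in 𝔽_p[Λ_1, …, Λ_N]; in particular the matrix Ā^I(Λ) is invertible over the field of rational functions 𝔽_p(Λ_1, …, Λ_N). -/

import Mathlib

open MvPolynomial

/-- `a_j⁺ = (a_{0j}, …, a_{nj}, 1) ∈ ℕ^{n+2}`. -/
def aplus {n N : ℕ} (a : Fin N → Fin (n + 1) → ℕ) (j : Fin N) : Fin (n + 2) → ℕ :=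
  Fin.snoc (a j) 1

/-- Base-`B` representations with digits `< B` are unique. -/
lemma base_inj {k B : ℕ} (x y : Fin k → ℕ) (hx : ∀ i, x i < B) (hy : ∀ i, y i < B)
    (h : ∑ i, x i * B ^ (i : ℕ) = ∑ i, y i * B ^ (i : ℕ)) : x = y := by
  induction k with
  | zero => funext i; exact i.elim0
  | succ k ih =>
    have hB : 0 < B := lt_of_le_of_lt (Nat.zero_le _) (hx 0)
    rw [Fin.sum_univ_succ, Fin.sum_univ_succ] at h
    simp only [Fin.val_zero, pow_zero, mul_one, Fin.val_succ] at h
    have hrw : ∀ z : Fin (k+1) → ℕ, ∑ i : Fin k, z i.succ * B ^ ((i:ℕ)+1)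
        = B * ∑ i : Fin k, z i.succ * B ^ (i:ℕ) := by
      intro z
      rw [Finset.mul_sum]
      refine Finset.sum_congr rfl fun i _ => ?_
      ring
    rw [hrw x, hrw y] at h
    have h0 : x 0 = y 0 := by
      have h' := congrArg (· % B) h
      simpa [Nat.add_mul_mod_self_left, Nat.mod_eq_of_lt (hx 0), Nat.mod_eq_of_lt (hy 0)] using h'
    have h1 : ∑ i : Fin k, x i.succ * B ^ (i:ℕ) = ∑ i : Fin k, y i.succ * B ^ (i:ℕ) := by
      rw [h0] at h
      exact Nat.eq_of_mul_eq_mul_left hB (Nat.add_left_cancel h)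
    have h2 := ih (fun i => x i.succ) (fun i => y i.succ) (fun i => hx _) (fun i => hy _) h1
    funext i
    refine Fin.cases h0 (fun i => congrFun h2 i) i

/-- Split a sum over `Fin N` into the first `μ` indices, the next `m` indices, assuming
the function vanishes from `μ + m` on. -/
lemma split_sum {M : Type*} [AddCommMonoid M] {N μ m : ℕ} (hNm : μ + m ≤ N)
    (F : Fin N → M) (hF : ∀ j : Fin N, μ + m ≤ (j : ℕ) → F j = 0) :
    ∑ j, F j = (∑ t : Fin μ, F ⟨(t:ℕ), by omega⟩) + ∑ s : Fin m, F ⟨μ + (s:ℕ), by omega⟩ := by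
  classical
  set G : ℕ → M := fun x => if h : x < N then F ⟨x, h⟩ else 0 with hG
  have hFG : ∀ j : Fin N, F j = G (j : ℕ) := by
    intro j
    simp [hG, j.isLt]
  calc ∑ j : Fin N, F j = ∑ j : Fin N, G (j:ℕ) := Finset.sum_congr rfl fun j _ => hFG j
    _ = ∑ x ∈ Finset.range N, G x := Fin.sum_univ_eq_sum_range G N
    _ = (∑ x ∈ Finset.range (μ+m), G x) + ∑ x ∈ Finset.Ico (μ+m) N, G x := by
        simp only [Finset.range_eq_Ico]
        exact (Finset.sum_Ico_consecutive G (Nat.zero_le _) hNm).symm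
    _ = ∑ x ∈ Finset.range (μ+m), G x := by
        have hz : ∑ x ∈ Finset.Ico (μ+m) N, G x = 0 := by
          refine Finset.sum_eq_zero fun x hx => ?_
          rw [Finset.mem_Ico] at hx
          simp only [hG, dif_pos hx.2]
          exact hF _ hx.1
        rw [hz, add_zero]
    _ = (∑ x ∈ Finset.range μ, G x) + ∑ x ∈ Finset.Ico μ (μ+m), G x := by
        simp only [Finset.range_eq_Ico]
        exact (Finset.sum_Ico_consecutive G (Nat.zero_le _) (Nat.le_add_right _ _)).symm
    _ = (∑ t : Fin μ, F ⟨(t:ℕ), by omega⟩) + ∑ s : Fin m, F ⟨μ + (s:ℕ), by omega⟩ := by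
        congr 1
        · rw [← Fin.sum_univ_eq_sum_range G μ]
          refine Finset.sum_congr rfl fun t _ => ?_
          have ht : (t:ℕ) < N := by omega
          simp [hG, ht]
        · rw [Finset.sum_Ico_eq_sum_range]
          simp only [Nat.add_sub_cancel_left]
          rw [← Fin.sum_univ_eq_sum_range (fun i => G (μ + i)) m]
          refine Finset.sum_congr rfl fun s _ => ?_
          have hs : μ + (s:ℕ) < N := by omega
          simp [hG, hs]

/-- Core combinatorial uniqueness lemma. -/
lemma core_lemma {m q : ℕ} (L : Fin m → ℕ) (hL : Function.Injective L)
    (θ π : Fin m → Fin m) (hθ : Function.Bijective θ) (hπ : Function.Injective π)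
    (β : Fin m → Fin m → ℕ)
    (hrow : ∀ c, ∑ s, β c s = q)
    (hcol : ∀ s, ∑ c, β c s = q)
    (heq : ∀ c, (∑ s, β c s * L s) + L (π c) = (q + 1) * L (θ c)) :
    ∀ c, π c = θ c ∧ ∀ s, s ≠ θ c → β c s = 0 := by
  suffices H : ∀ k, ∀ c, (Finset.univ.filter (fun s => L (θ c) < L s)).card = k →
      π c = θ c ∧ ∀ s, s ≠ θ c → β c s = 0 from fun c => H _ c rfl
  intro k
  induction k using Nat.strong_induction_on with
  | _ k ih =>
  intro c hc
  have IH : ∀ c', L (θ c) < L (θ c') → π c' = θ c' ∧ ∀ s, s ≠ θ c' → β c' s = 0 := by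
    intro c' hlt
    refine ih _ ?_ c' rfl
    rw [← hc]
    apply Finset.card_lt_card
    constructor
    · intro s hs
      simp only [Finset.mem_filter, Finset.mem_univ, true_and] at hs ⊢
      exact lt_trans hlt hs
    · intro hsub
      have := hsub (Finset.mem_filter.mpr ⟨Finset.mem_univ _, hlt⟩)
      simp only [Finset.mem_filter, Finset.mem_univ, true_and] at this
      exact lt_irrefl _ this
  have zero1 : ∀ s, L (θ c) < L s → β c s = 0 := by
    intro s hs
    obtain ⟨c', rfl⟩ := hθ.2 s
    have P := IH c' hs
    have hdiag : β c' (θ c') = q := by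
      have e := hrow c'
      rw [Finset.sum_eq_single (θ c') (fun b _ hb => P.2 b hb) (fun h => absurd (Finset.mem_univ _) h)] at e
      exact e
    have hcne : c ≠ c' := by
      intro h; rw [h] at hs; exact lt_irrefl _ hs
    have hsum2 : β c (θ c') + β c' (θ c') ≤ q := by
      have hle2 : ∑ x ∈ ({c, c'} : Finset (Fin m)), β x (θ c') ≤ ∑ x, β x (θ c') :=
        Finset.sum_le_sum_of_subset (Finset.subset_univ _)
      rw [Finset.sum_pair hcne, hcol (θ c')] at hle2
      exact hle2
    omega
  have hπc : L (π c) ≤ L (θ c) := by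
    by_contra hlt
    push_neg at hlt
    obtain ⟨c', he⟩ := hθ.2 (π c)
    have P := IH c' (by rw [he]; exact hlt)
    have hcc : c' = c := hπ (by rw [P.1, he])
    rw [hcc] at he
    rw [← he] at hlt
    exact lt_irrefl _ hlt
  have hle : ∀ s ∈ Finset.univ, β c s * L s ≤ β c s * L (θ c) := by
    intro s _
    by_cases hcase : L s ≤ L (θ c)
    · exact Nat.mul_le_mul_left _ hcase
    · push_neg at hcase
      rw [zero1 s hcase]
      simp
  have hsle : (∑ s, β c s * L s) ≤ ∑ s, β c s * L (θ c) := Finset.sum_le_sum hle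
  have hsum_eq : ∑ s, β c s * L (θ c) = q * L (θ c) := by
    rw [← Finset.sum_mul, hrow]
  have heqc := heq c
  have hfact : (q + 1) * L (θ c) = q * L (θ c) + L (θ c) := by ring
  have key1 : (∑ s, β c s * L s) = ∑ s, β c s * L (θ c) := by omega
  have key2 : L (π c) = L (θ c) := by omega
  refine ⟨hL key2, fun s hs => ?_⟩
  have := (Finset.sum_eq_sum_iff_of_le hle).mp key1 s (Finset.mem_univ s)
  by_cases hcase : L (θ c) < L s
  · exact zero1 s hcase
  · push_neg at hcase
    have hlt : L s < L (θ c) := lt_of_le_of_ne hcase (fun h => hs (hL h))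
    rcases Nat.eq_zero_or_pos (β c s) with h0 | hpos
    · exact h0
    · exfalso
      have := Nat.eq_of_mul_eq_mul_left hpos this
      omega

/-- Coefficient of a product of multivariate polynomials. -/
lemma mv_coeff_prod {σ ι R : Type*} [CommSemiring R] [DecidableEq σ] [DecidableEq ι]
    (f : ι → MvPolynomial σ R) (d : σ →₀ ℕ) (s : Finset ι) :
    MvPolynomial.coeff d (∏ j ∈ s, f j) =
      ∑ l ∈ Finset.finsuppAntidiag s d, ∏ i ∈ s, MvPolynomial.coeff (l i) (f i) := by
  have h := MvPowerSeries.coeff_prod (fun j => (f j : MvPowerSeries σ R)) d s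
  have hcoe : ((∏ j ∈ s, f j : MvPolynomial σ R) : MvPowerSeries σ R)
      = ∏ j ∈ s, (f j : MvPowerSeries σ R) :=
    map_prod MvPolynomial.coeToMvPowerSeries.ringHom f s
  rw [← hcoe] at h
  rw [MvPolynomial.coeff_coe] at h
  simpa using h

/-- Theorem 7.2: under Hypothesis 7.1, the determinant of the `m × m`
matrix `Ā^I(Λ) = [Ā^I_{uv}(Λ)]_{u,v ∈ U^I_min}` is a nonzero polynomial in
`𝔽_p[Λ₁, …, Λ_N]`.  Here `U^I_min` is enumerated by `umin : Fin m → ℕ^{n+2}` and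
Hypothesis 7.1 is encoded by `κ` and `hκ`. -/
theorem stmt_8 (p n N d : ℕ) (hp : p.Prime) (hn : 1 ≤ n) (hN : 1 ≤ N) (hd : 2 ≤ d)
    (a : Fin N → Fin (n + 1) → ℕ) (ha : ∀ j, ∑ i, a j i = d)
    (I : Finset (Fin (n + 1)))
    (μ m : ℕ) (hμ : μ + 1 = (I.card + d - 1) / d)
    (umin : Fin m → Fin (n + 2) → ℕ)
    (huinj : Function.Injective umin)
    (hurange : ∀ u : Fin (n + 2) → ℕ,
      ((∑ i : Fin (n + 1), u i.castSucc = d * u (Fin.last (n + 1))) ∧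
        (∀ i ∈ I, 0 < u i.castSucc) ∧ u (Fin.last (n + 1)) = μ + 1)
      ↔ ∃ r : Fin m, umin r = u)
    (hNm : μ + m ≤ N)
    (κ : Fin m → Fin m)
    (hκ : ∀ r : Fin m, ∀ i : Fin (n + 2),
      umin r i = aplus a ⟨μ + (κ r : ℕ), by have := (κ r).isLt; omega⟩ i +
        ∑ t : Fin μ, aplus a ⟨(t : ℕ), by have := t.isLt; omega⟩ i)
    (M : Matrix (Fin m) (Fin m) (MvPolynomial (Fin N) (ZMod p)))
    (hM : ∀ r c : Fin m, ∀ m' : Fin N →₀ ℕ, (M r c).coeff m' =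
      if (∀ j, m' j ≤ p - 1) ∧
          (∀ i : Fin (n + 2), ∑ j, (m' j : ℤ) * (aplus a j i : ℤ) = p * umin r i - umin c i)
      then (-1) ^ (μ + 1) * (∏ j, ((m' j).factorial : ZMod p))⁻¹
      else 0) :
    M.det ≠ 0 := by
  classical
  haveI : Fact p.Prime := ⟨hp⟩
  have hp2 : 2 ≤ p := hp.two_le
  set q := p - 1 with hqdef
  have hq1 : 1 ≤ q := by omega
  have hqZ : (q : ℤ) = (p : ℤ) - 1 := by omega
  have hidx : ∀ s : Fin m, μ + (s : ℕ) < N := fun s => by have := s.isLt; omega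
  have hjdx : ∀ t : Fin μ, (t : ℕ) < N := fun t => by have := t.isLt; omega
  have hκ' : ∀ (r : Fin m) (i : Fin (n + 2)),
      umin r i = aplus a ⟨μ + (κ r : ℕ), hidx (κ r)⟩ i +
        ∑ t : Fin μ, aplus a ⟨(t : ℕ), hjdx t⟩ i := hκ
  have hκinj : Function.Injective κ := by
    intro r r' h
    apply huinj
    funext i
    rw [hκ' r i, hκ' r' i, h]
  have hκsurj : Function.Surjective κ := Finite.injective_iff_surjective.mp hκinj
  have haplus_last : ∀ j, aplus a j (Fin.last (n + 1)) = 1 := fun j => by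
    simp [aplus]
  have haplus_cast : ∀ j (i : Fin (n + 1)), aplus a j i.castSucc = a j i := fun j i => by
    simp [aplus]
  have hulast : ∀ r, umin r (Fin.last (n + 1)) = μ + 1 := by
    intro r
    rw [hκ' r, haplus_last]
    simp only [haplus_last, Finset.sum_const, Finset.card_univ, Fintype.card_fin, smul_eq_mul]
    omega
  have hucast : ∀ (r : Fin m) (i : Fin (n + 1)),
      umin r i.castSucc = a ⟨μ + (κ r : ℕ), hidx (κ r)⟩ i +
        ∑ t : Fin μ, a ⟨(t : ℕ), hjdx t⟩ i := by
    intro r i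
    rw [hκ' r]
    simp only [haplus_cast]
  -- weights
  set w : Fin N → ℕ := fun j => ∑ i : Fin (n + 1), a j i * (d + 1) ^ (i : ℕ) with hw
  set L : Fin m → ℕ := fun s => w ⟨μ + (s : ℕ), hidx s⟩ with hLdef
  have had : ∀ j i, a j i ≤ d := by
    intro j i
    calc a j i ≤ ∑ i', a j i' :=
          Finset.single_le_sum (fun _ _ => Nat.zero_le _) (Finset.mem_univ i)
      _ = d := ha j
  have hLinj : Function.Injective L := by
    intro s s' hss
    have hfun : (fun i => a ⟨μ + (s : ℕ), hidx s⟩ i) = (fun i => a ⟨μ + (s' : ℕ), hidx s'⟩ i) := by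
      refine base_inj (B := d + 1) _ _ (fun i => by have := had ⟨μ + (s : ℕ), hidx s⟩ i; omega)
        (fun i => by have := had ⟨μ + (s' : ℕ), hidx s'⟩ i; omega) ?_
      exact hss
    obtain ⟨r, rfl⟩ := hκsurj s
    obtain ⟨r', rfl⟩ := hκsurj s'
    have hum : umin r = umin r' := by
      funext i
      refine Fin.lastCases ?_ (fun i0 => ?_) i
      · rw [hulast, hulast]
      · rw [hucast, hucast]
        congr 1
        exact congrFun hfun i0
    exact congrArg κ (huinj hum)
  intro hdet0
  -- the distinguished monomial and the distinguished decomposition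
  set m0 : Fin N →₀ ℕ := Finsupp.equivFunOnFinite.symm
    (fun j => if (j : ℕ) < μ then m * q else if (j : ℕ) < μ + m then q else 0) with hm0def
  have hm0 : ∀ j, m0 j = if (j : ℕ) < μ then m * q else if (j : ℕ) < μ + m then q else 0 :=
    fun j => rfl
  set ν : Fin m → (Fin N →₀ ℕ) := fun c => Finsupp.equivFunOnFinite.symm
    (fun j => if ((j : ℕ) < μ ∨ (j : ℕ) = μ + (κ c : ℕ)) then q else 0) with hνdef
  have hν : ∀ c j, ν c j = if ((j : ℕ) < μ ∨ (j : ℕ) = μ + (κ c : ℕ)) then q else 0 :=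
    fun c j => rfl
  -- Main uniqueness statement
  have main : ∀ (σ : Equiv.Perm (Fin m)) (g : Fin m → (Fin N →₀ ℕ)),
      (∀ j, (∑ c, g c j) = m0 j) →
      (∀ c, (∀ j, g c j ≤ p - 1) ∧
        (∀ i : Fin (n + 2), ∑ j, (g c j : ℤ) * (aplus a j i : ℤ)
            = p * umin (σ c) i - umin c i)) →
      σ = 1 ∧ ∀ c, g c = ν c := by
    intro σ g hsum hcond
    have hbound : ∀ c j, g c j ≤ q := fun c j => (hcond c).1 j
    have h3 : ∀ (c : Fin m) (j : Fin N), (j : ℕ) < μ → g c j = q := by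
      intro c j hj
      have hcol := hsum j
      rw [hm0 j, if_pos hj] at hcol
      have hconst : (∑ _c : Fin m, q) = m * q := by
        simp [Finset.sum_const, Finset.card_univ, mul_comm]
      exact (Finset.sum_eq_sum_iff_of_le (fun c' _ => hbound c' j)).mp
        (by rw [hcol, ← hconst]) c (Finset.mem_univ c)
    have h4 : ∀ (c : Fin m) (j : Fin N), μ + m ≤ (j : ℕ) → g c j = 0 := by
      intro c j hj
      have hcol := hsum j
      rw [hm0 j, if_neg (by omega), if_neg (by omega)] at hcol
      exact (Finset.sum_eq_zero_iff).mp hcol c (Finset.mem_univ c)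
    have hrowsum : ∀ c, ∑ s : Fin m, g c ⟨μ + (s : ℕ), hidx s⟩ = q := by
      intro c
      have e := (hcond c).2 (Fin.last (n + 1))
      simp only [haplus_last, hulast, Nat.cast_one, mul_one] at e
      have e' : (∑ j, (g c j : ℤ)) = (q : ℤ) * ((μ : ℤ) + 1) := by
        rw [e, hqZ]
        push_cast
        ring
      have eN : (∑ j, g c j) = q * (μ + 1) := by exact_mod_cast e'
      have hsplit : (∑ j, g c j) = (∑ t : Fin μ, g c ⟨(t : ℕ), hjdx t⟩)
          + ∑ s : Fin m, g c ⟨μ + (s : ℕ), hidx s⟩ := split_sum hNm (⇑(g c)) (h4 c)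
      have hμpart : (∑ t : Fin μ, g c ⟨(t : ℕ), hjdx t⟩) = μ * q := by
        calc (∑ t : Fin μ, g c ⟨(t : ℕ), hjdx t⟩) = ∑ _t : Fin μ, q :=
              Finset.sum_congr rfl (fun t _ => h3 c ⟨(t : ℕ), hjdx t⟩ t.isLt)
          _ = μ * q := by simp [Finset.sum_const, Finset.card_univ, mul_comm]
      have hq2 : q * (μ + 1) = μ * q + q := by ring
      omega
    -- cast of w
    have hwZ : ∀ j, ((w j : ℕ) : ℤ) = ∑ i0 : Fin (n + 1), (a j i0 : ℤ) * ((d + 1 : ℕ) ^ (i0 : ℕ) : ℤ) := by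
      intro j
      rw [hw]
      push_cast
      ring
    -- the scalarized linear equation
    have hscalar : ∀ c, (∑ s : Fin m, g c ⟨μ + (s : ℕ), hidx s⟩ * L s) + L (κ c)
        = p * L (κ (σ c)) := by
      intro c
      have ei : ∀ i0 : Fin (n + 1), ∑ j, (g c j : ℤ) * (a j i0 : ℤ)
          = p * umin (σ c) i0.castSucc - umin c i0.castSucc := by
        intro i0
        have e := (hcond c).2 i0.castSucc
        simpa only [haplus_cast] using e
      have eW : ∑ j, (g c j : ℤ) * (w j : ℤ)
          = ∑ i0 : Fin (n + 1), ((p : ℤ) * umin (σ c) i0.castSucc - umin c i0.castSucc)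
              * ((d + 1 : ℕ) ^ (i0 : ℕ) : ℤ) := by
        calc ∑ j, (g c j : ℤ) * (w j : ℤ)
            = ∑ j, ∑ i0 : Fin (n + 1),
                ((g c j : ℤ) * (a j i0 : ℤ)) * ((d + 1 : ℕ) ^ (i0 : ℕ) : ℤ) := by
              refine Finset.sum_congr rfl fun j _ => ?_
              rw [hwZ j, Finset.mul_sum]
              exact Finset.sum_congr rfl fun i0 _ => by ring
          _ = ∑ i0 : Fin (n + 1), ∑ j,
                ((g c j : ℤ) * (a j i0 : ℤ)) * ((d + 1 : ℕ) ^ (i0 : ℕ) : ℤ) := Finset.sum_comm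
          _ = _ := by
              refine Finset.sum_congr rfl fun i0 _ => ?_
              rw [← Finset.sum_mul, ei i0]
      have hW : ∀ r, ∑ i0 : Fin (n + 1), (umin r i0.castSucc : ℤ) * ((d + 1 : ℕ) ^ (i0 : ℕ) : ℤ)
          = (L (κ r) : ℤ) + ∑ t : Fin μ, (w ⟨(t : ℕ), hjdx t⟩ : ℤ) := by
        intro r
        have hu : ∀ i0 : Fin (n + 1), (umin r i0.castSucc : ℤ)
            = (a ⟨μ + (κ r : ℕ), hidx (κ r)⟩ i0 : ℤ)
              + ∑ t : Fin μ, (a ⟨(t : ℕ), hjdx t⟩ i0 : ℤ) := by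
          intro i0
          rw [hucast r i0]
          push_cast
          ring
        calc ∑ i0 : Fin (n + 1), (umin r i0.castSucc : ℤ) * ((d + 1 : ℕ) ^ (i0 : ℕ) : ℤ)
            = ∑ i0 : Fin (n + 1),
                ((a ⟨μ + (κ r : ℕ), hidx (κ r)⟩ i0 : ℤ) * ((d + 1 : ℕ) ^ (i0 : ℕ) : ℤ)
                + ∑ t : Fin μ, (a ⟨(t : ℕ), hjdx t⟩ i0 : ℤ) * ((d + 1 : ℕ) ^ (i0 : ℕ) : ℤ)) := by
              refine Finset.sum_congr rfl fun i0 _ => ?_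
              rw [hu i0, add_mul, Finset.sum_mul]
          _ = (L (κ r) : ℤ) + ∑ t : Fin μ, (w ⟨(t : ℕ), hjdx t⟩ : ℤ) := by
              rw [Finset.sum_add_distrib]
              congr 1
              · rw [show L (κ r) = w ⟨μ + (κ r : ℕ), hidx (κ r)⟩ from rfl, hwZ]
              · rw [Finset.sum_comm]
                exact Finset.sum_congr rfl fun t _ => (hwZ _).symm
      have hFzero : ∀ j : Fin N, μ + m ≤ (j : ℕ) → (g c j : ℤ) * (w j : ℤ) = 0 := by
        intro j hj
        rw [h4 c j hj]
        simp
      have hsplit : ∑ j, (g c j : ℤ) * (w j : ℤ)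
          = (∑ t : Fin μ, (g c ⟨(t : ℕ), hjdx t⟩ : ℤ) * (w ⟨(t : ℕ), hjdx t⟩ : ℤ))
            + ∑ s : Fin m, (g c ⟨μ + (s : ℕ), hidx s⟩ : ℤ) * (L s : ℤ) :=
        split_sum hNm (fun j => (g c j : ℤ) * (w j : ℤ)) hFzero
      have hμpart : (∑ t : Fin μ, (g c ⟨(t : ℕ), hjdx t⟩ : ℤ) * (w ⟨(t : ℕ), hjdx t⟩ : ℤ))
          = (q : ℤ) * ∑ t : Fin μ, (w ⟨(t : ℕ), hjdx t⟩ : ℤ) := by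
        rw [Finset.mul_sum]
        refine Finset.sum_congr rfl fun t _ => ?_
        rw [h3 c ⟨(t : ℕ), hjdx t⟩ t.isLt]
      have hrhs : ∑ i0 : Fin (n + 1), ((p : ℤ) * umin (σ c) i0.castSucc - umin c i0.castSucc)
              * ((d + 1 : ℕ) ^ (i0 : ℕ) : ℤ)
          = (p : ℤ) * (∑ i0 : Fin (n + 1), (umin (σ c) i0.castSucc : ℤ)
                * ((d + 1 : ℕ) ^ (i0 : ℕ) : ℤ))
            - ∑ i0 : Fin (n + 1), (umin c i0.castSucc : ℤ) * ((d + 1 : ℕ) ^ (i0 : ℕ) : ℤ) := by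
        rw [Finset.mul_sum, ← Finset.sum_sub_distrib]
        exact Finset.sum_congr rfl fun i0 _ => by ring
      set C0 : ℤ := ∑ t : Fin μ, (w ⟨(t : ℕ), hjdx t⟩ : ℤ) with hC0
      have ecomb : (q : ℤ) * C0 + (∑ s : Fin m, (g c ⟨μ + (s : ℕ), hidx s⟩ : ℤ) * (L s : ℤ))
          = (p : ℤ) * ((L (κ (σ c)) : ℤ) + C0) - ((L (κ c) : ℤ) + C0) := by
        rw [← hμpart, ← hsplit, eW, hrhs, hW, hW]
      have eZ : (∑ s : Fin m, (g c ⟨μ + (s : ℕ), hidx s⟩ : ℤ) * (L s : ℤ)) + (L (κ c) : ℤ)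
          = (p : ℤ) * (L (κ (σ c)) : ℤ) := by
        linear_combination ecomb - C0 * hqZ
      exact_mod_cast eZ
    -- apply the core combinatorial lemma
    have hκσinj : Function.Injective (fun c => κ (σ c)) := fun x y h => σ.injective (hκinj h)
    have hκσsurj : Function.Surjective (fun c => κ (σ c)) := by
      intro s
      obtain ⟨r, hr⟩ := hκsurj s
      exact ⟨σ.symm r, by simp [hr]⟩
    have hcolS : ∀ s : Fin m, ∑ c, g c ⟨μ + (s : ℕ), hidx s⟩ = q := by
      intro s
      have hh := hsum ⟨μ + (s : ℕ), hidx s⟩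
      rw [hm0, if_neg (by simp), if_pos (by simp [s.isLt])] at hh
      exact hh
    have hcore := core_lemma L hLinj (fun c => κ (σ c)) κ ⟨hκσinj, hκσsurj⟩ hκinj
      (fun c s => g c ⟨μ + (s : ℕ), hidx s⟩) hrowsum hcolS
      (fun c => by rw [show q + 1 = p by omega]; exact hscalar c)
    have hσ1 : σ = 1 := by
      refine Equiv.ext fun c => ?_
      have hcc := (hcore c).1
      rw [Equiv.Perm.coe_one, id_eq]
      exact (hκinj hcc).symm
    simp only [hσ1, Equiv.Perm.one_apply] at hcore
    refine ⟨hσ1, fun c => ?_⟩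
    have hdiagval : g c ⟨μ + (κ c : ℕ), hidx (κ c)⟩ = q := by
      have hcs := hcolS (κ c)
      rw [Finset.sum_eq_single c (fun c' _ hc' => (hcore c').2 (κ c)
        (fun h => hc' (hκinj h.symm)))
        (fun h => absurd (Finset.mem_univ _) h)] at hcs
      exact hcs
    ext j
    rw [hν c j]
    rcases lt_or_ge (j : ℕ) μ with hj | hj
    · rw [if_pos (Or.inl hj)]
      exact h3 c j hj
    rcases lt_or_ge (j : ℕ) (μ + m) with hj2 | hj2
    · obtain ⟨s, hval⟩ : ∃ s : Fin m, (j : ℕ) = μ + (s : ℕ) :=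
        ⟨⟨(j : ℕ) - μ, by omega⟩, by simp; omega⟩
      have hjeq : j = ⟨μ + (s : ℕ), hidx s⟩ := Fin.ext (by simpa using hval)
      by_cases hsc : s = κ c
      · have hval2 : (j : ℕ) = μ + (κ c : ℕ) := by rw [hval, hsc]
        rw [if_pos (Or.inr hval2), hjeq, hsc]
        exact hdiagval
      · have hcond2 : ¬((j : ℕ) < μ ∨ (j : ℕ) = μ + (κ c : ℕ)) := by
          rintro (h | h)
          · omega
          · exact hsc (Fin.ext (by omega))
        rw [if_neg hcond2, hjeq]
        exact (hcore c).2 s hsc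
    · rw [if_neg (by have := (κ c).isLt; omega)]
      exact h4 c j hj2
  -- nonvanishing of factorials
  have hfactne : ∀ k : ℕ, k ≤ q → ((k.factorial : ZMod p) ≠ 0) := by
    intro k hk
    rw [Ne, ZMod.natCast_eq_zero_iff]
    intro hdvd
    have := (Nat.Prime.dvd_factorial hp).mp hdvd
    omega
  -- the distinguished decomposition satisfies the coefficient condition
  have hg0cond : ∀ c, (∀ j, ν c j ≤ q) ∧
      (∀ i : Fin (n + 2), ∑ j, (ν c j : ℤ) * (aplus a j i : ℤ)
        = p * umin c i - umin c i) := by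
    intro c
    constructor
    · intro j
      rw [hν c j]
      split <;> omega
    · intro i
      have hFzero : ∀ j : Fin N, μ + m ≤ (j : ℕ) → (ν c j : ℤ) * (aplus a j i : ℤ) = 0 := by
        intro j hj
        have hz : ν c j = 0 := by
          rw [hν c j, if_neg (by have := (κ c).isLt; omega)]
        rw [hz]
        simp
      have hsplit : (∑ j, (ν c j : ℤ) * (aplus a j i : ℤ))
          = (∑ t : Fin μ, (ν c ⟨(t : ℕ), hjdx t⟩ : ℤ) * (aplus a ⟨(t : ℕ), hjdx t⟩ i : ℤ))
            + ∑ s : Fin m, (ν c ⟨μ + (s : ℕ), hidx s⟩ : ℤ)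
                * (aplus a ⟨μ + (s : ℕ), hidx s⟩ i : ℤ) :=
        split_sum hNm (fun j => (ν c j : ℤ) * (aplus a j i : ℤ)) hFzero
      have h1 : (∑ t : Fin μ, (ν c ⟨(t : ℕ), hjdx t⟩ : ℤ) * (aplus a ⟨(t : ℕ), hjdx t⟩ i : ℤ))
          = (q : ℤ) * ∑ t : Fin μ, (aplus a ⟨(t : ℕ), hjdx t⟩ i : ℤ) := by
        rw [Finset.mul_sum]
        refine Finset.sum_congr rfl fun t _ => ?_
        have : ν c ⟨(t : ℕ), hjdx t⟩ = q := by
          rw [hν, if_pos (Or.inl (by simpa using t.isLt))]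
        rw [this]
      have h2 : (∑ s : Fin m, (ν c ⟨μ + (s : ℕ), hidx s⟩ : ℤ)
              * (aplus a ⟨μ + (s : ℕ), hidx s⟩ i : ℤ))
          = (q : ℤ) * (aplus a ⟨μ + (κ c : ℕ), hidx (κ c)⟩ i : ℤ) := by
        rw [Finset.sum_eq_single (κ c) (fun s _ hs => ?_) (fun h => absurd (Finset.mem_univ _) h)]
        · have : ν c ⟨μ + (κ c : ℕ), hidx (κ c)⟩ = q := by
            rw [hν, if_pos (Or.inr (by simp))]
          rw [this]
        · have : ν c ⟨μ + (s : ℕ), hidx s⟩ = 0 := by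
            rw [hν, if_neg]
            rintro (h | h)
            · simp at h
            · exact hs (Fin.ext (by simpa using h))
          rw [this]
          simp
      have huZ : (umin c i : ℤ) = (aplus a ⟨μ + (κ c : ℕ), hidx (κ c)⟩ i : ℤ)
          + ∑ t : Fin μ, (aplus a ⟨(t : ℕ), hjdx t⟩ i : ℤ) := by
        rw [hκ' c i]
        push_cast
        ring
      rw [hsplit, h1, h2]
      linear_combination (umin c i : ℤ) * hqZ - (q : ℤ) * huZ
  -- each diagonal coefficient is nonzero
  have hdiagcoeff : ∀ c, MvPolynomial.coeff (ν c) (M c c) ≠ 0 := by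
    intro c
    rw [hM c c (ν c), if_pos (hg0cond c)]
    apply mul_ne_zero
    · exact pow_ne_zero _ (by norm_num : (-1 : ZMod p) ≠ 0)
    · refine inv_ne_zero (Finset.prod_ne_zero_iff.mpr fun j _ => ?_)
      refine hfactne _ ?_
      rw [hν c j]
      split <;> omega
  -- the distinguished decomposition is in the antidiagonal
  have hg0mem : (Finsupp.equivFunOnFinite.symm ν)
      ∈ Finset.finsuppAntidiag (Finset.univ : Finset (Fin m)) m0 := by
    rw [Finset.mem_finsuppAntidiag]
    refine ⟨?_, Finset.subset_univ _⟩
    ext j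
    rw [Finset.sum_apply', hm0 j]
    rcases lt_or_ge (j : ℕ) μ with hj | hj
    · rw [if_pos hj]
      calc ∑ c, (Finsupp.equivFunOnFinite.symm ν) c j = ∑ _c : Fin m, q :=
            Finset.sum_congr rfl fun c _ => by
              show ν c j = q
              rw [hν, if_pos (Or.inl hj)]
        _ = m * q := by simp [Finset.sum_const, Finset.card_univ, mul_comm]
    rcases lt_or_ge (j : ℕ) (μ + m) with hj2 | hj2
    · rw [if_neg (by omega), if_pos hj2]
      obtain ⟨s, hval⟩ : ∃ s : Fin m, (j : ℕ) = μ + (s : ℕ) :=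
        ⟨⟨(j : ℕ) - μ, by omega⟩, by simp; omega⟩
      obtain ⟨c0, hc0⟩ := hκsurj s
      rw [Finset.sum_eq_single c0 (fun c' _ hc' => ?_) (fun h => absurd (Finset.mem_univ _) h)]
      · show ν c0 j = q
        rw [hν, if_pos (Or.inr (by rw [hval, hc0]))]
      · show ν c' j = 0
        rw [hν, if_neg]
        rintro (h | h)
        · omega
        · exact hc' (hκinj (hc0 ▸ Fin.ext (by omega)))
    · rw [if_neg (by omega), if_neg (by omega)]
      refine Finset.sum_eq_zero fun c _ => ?_
      show ν c j = 0
      rw [hν, if_neg (by have := (κ c).isLt; omega)]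
  -- the coefficient of each permutation product
  have hprodcoeff : ∀ σ : Equiv.Perm (Fin m),
      MvPolynomial.coeff m0 (∏ c, M (σ c) c)
        = if σ = 1 then ∏ c, MvPolynomial.coeff (ν c) (M c c) else 0 := by
    intro σ
    rw [show (∏ c, M (σ c) c) = ∏ c ∈ Finset.univ, M (σ c) c from rfl, mv_coeff_prod]
    have hforce : ∀ l ∈ Finset.finsuppAntidiag (Finset.univ : Finset (Fin m)) m0,
        (∏ c, MvPolynomial.coeff (l c) (M (σ c) c)) ≠ 0 →
        σ = 1 ∧ ∀ c, l c = ν c := by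
      intro l hl hne
      rw [Finset.mem_finsuppAntidiag] at hl
      have hcols : ∀ j, (∑ c, l c j) = m0 j := by
        intro j
        calc ∑ c, l c j = (Finset.univ.sum l) j := (Finset.sum_apply' j).symm
          _ = m0 j := by rw [hl.1]
      have hc2 : ∀ c, (∀ j, l c j ≤ p - 1) ∧
          (∀ i : Fin (n + 2), ∑ j, (l c j : ℤ) * (aplus a j i : ℤ)
            = p * umin (σ c) i - umin c i) := by
        intro c
        have hne_c : MvPolynomial.coeff (l c) (M (σ c) c) ≠ 0 := fun h0 =>
          hne (Finset.prod_eq_zero (Finset.mem_univ c) h0)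
        by_contra hc
        rw [hM (σ c) c (l c), if_neg hc] at hne_c
        exact hne_c rfl
      exact main σ (fun c => l c) hcols hc2
    by_cases hσ : σ = 1
    · subst hσ
      rw [if_pos rfl]
      rw [Finset.sum_eq_single (Finsupp.equivFunOnFinite.symm ν) (fun l hl hlne => ?_)
        (fun h => absurd hg0mem h)]
      · rfl
      · by_contra hne
        obtain ⟨-, hlν⟩ := hforce l hl hne
        exact hlne (Finsupp.ext fun c => hlν c)
    · rw [if_neg hσ]
      refine Finset.sum_eq_zero fun l hl => ?_
      by_contra hne
      exact hσ (hforce l hl hne).1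
  -- conclusion
  have hcoeffdet : MvPolynomial.coeff m0 M.det = ∏ c, MvPolynomial.coeff (ν c) (M c c) := by
    rw [Matrix.det_apply, MvPolynomial.coeff_sum]
    rw [Finset.sum_eq_single (1 : Equiv.Perm (Fin m)) (fun σ _ hσ => ?_)
      (fun h => absurd (Finset.mem_univ _) h)]
    · rw [Units.smul_def, MvPolynomial.coeff_smul, hprodcoeff 1, if_pos rfl]
      simp
    · rw [Units.smul_def, MvPolynomial.coeff_smul, hprodcoeff σ, if_neg hσ, smul_zero]
  have hzero : MvPolynomial.coeff m0 M.det = 0 := by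
    rw [hdet0]
    simp
  rw [hcoeffdet] at hzero
  exact Finset.prod_ne_zero_iff.mpr (fun c _ => hdiagcoeff c) hzero
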